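/- Let m ≥ 2, h > 0, γ > 0, p > 1, k > 0, and let g_a be the diffusivity g_a(r) = 1 if 0 ≤ r < γ, g_a(r) = (γ/r)^{p/2} if r ≥ γ. For U ∈ ℝ^m let A(U) be the m×m tridiagonal matrix with entries a_{i,i+1} = a_{i+1,i} = g_i/h² where g_i = g_a((U_{i+1} − U_i)²/h²), a_{i,i} = −(g_{i−1} + g_i)/h² for 2 ≤ i ≤ m−1, a_{1,1} = −g_1/h², a_{m,m} = −g_{m−1}/h², and a_{i,j} = 0 otherwise. Then for every U⁰ ∈ ℝ^m the map G : ℝ^m → ℝ^m, G(U) = (I − k·A(U))⁻¹ U⁰, has at least one fixed point U* ∈ ℝ^m, i.e. there exists U* satisfying (I − k·A(U*))·U* = U⁰. -/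

import Mathlib

/-- The proposed diffusivity `g_a`: `g_a(r) = 1` for `0 ≤ r < γ` and
`g_a(r) = (γ/r)^{p/2}` for `r ≥ γ`. -/
noncomputable def ga (γ p r : ℝ) : ℝ :=
  if r < γ then 1 else (γ / r) ^ (p / 2)

/-- The tridiagonal matrix `A(U)` of the 1-D semi-discretization (0-based
indices): `a_{i,i+1} = a_{i+1,i} = g_i/h²` with
`g_i = g((U_{i+1} − U_i)²/h²)`, diagonal entries
`a_{i,i} = −(g_{i−1} + g_i)/h²` (dropping `g_{i−1}` in the first row and `g_i`
in the last row, reflecting the Neumann boundary conditions), and `0` elsewhere. -/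
noncomputable def diffMat (m : ℕ) (h : ℝ) (g : ℝ → ℝ) (U : Fin m → ℝ) :
    Matrix (Fin m) (Fin m) ℝ := fun i j =>
  let V : ℕ → ℝ := fun l => if hl : l < m then U ⟨l, hl⟩ else 0
  let gg : ℕ → ℝ := fun l => g ((V (l + 1) - V l) ^ 2 / h ^ 2)
  if (j : ℕ) = (i : ℕ) + 1 then gg (i : ℕ) / h ^ 2
  else if (i : ℕ) = (j : ℕ) + 1 then gg (j : ℕ) / h ^ 2
  else if i = j then
    -(((if 0 < (i : ℕ) then gg ((i : ℕ) - 1) else 0) +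
       (if (i : ℕ) + 1 < m then gg (i : ℕ) else 0)) / h ^ 2)
  else 0

/-! ### Auxiliary material -/

/-- Extension of a vector by zero. -/
noncomputable def Vv (m : ℕ) (U : Fin m → ℝ) : ℕ → ℝ :=
  fun l => if hl : l < m then U ⟨l, hl⟩ else 0

/-- A primitive of the diffusivity. -/
noncomputable def PhiP (γ p s : ℝ) : ℝ := ∫ t in (0:ℝ)..s, ga γ p t

lemma ga_pos {γ p : ℝ} (hγ : 0 < γ) (r : ℝ) : 0 < ga γ p r := by
  unfold ga
  split_ifs with hr
  · exact one_pos
  · exact Real.rpow_pos_of_pos (div_pos hγ (lt_of_lt_of_le hγ (not_lt.1 hr))) _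

lemma ga_continuous {γ p : ℝ} (hγ : 0 < γ) (hp : 1 < p) : Continuous (ga γ p) := by
  rw [continuous_iff_continuousAt]
  intro r
  have hca : ∀ x : ℝ, γ ≤ x → ContinuousAt (fun r : ℝ => (γ / r) ^ (p / 2)) x := by
    intro x hx
    have hx0 : x ≠ 0 := ne_of_gt (lt_of_lt_of_le hγ hx)
    exact (continuousAt_const.div continuousAt_id hx0).rpow_const
      (Or.inr (by positivity))
  rcases lt_trichotomy r γ with hr | hr | hr
  · have hev : ga γ p =ᶠ[nhds r] fun _ : ℝ => (1:ℝ) := by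
      filter_upwards [Iio_mem_nhds hr] with x hx
      rw [Set.mem_Iio] at hx
      simp [ga, hx]
    exact continuousAt_const.congr hev.symm
  · subst hr
    rw [continuousAt_iff_continuous_left_right]
    constructor
    · apply (continuousWithinAt_const (b := (1:ℝ))).congr
      · intro x hx
        rw [Set.mem_Iic] at hx
        rcases eq_or_lt_of_le hx with hxe | hxl
        · rw [hxe]; simp [ga, div_self (ne_of_gt hγ)]
        · simp [ga, hxl]
      · simp [ga, div_self (ne_of_gt hγ)]
    · apply ((hca r le_rfl).continuousWithinAt).congr
      · intro x hx
        rw [Set.mem_Ici] at hx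
        simp [ga, not_lt.2 hx]
      · simp [ga, div_self (ne_of_gt hγ)]
  · have hev : ga γ p =ᶠ[nhds r] fun x : ℝ => (γ / x) ^ (p / 2) := by
      filter_upwards [Ioi_mem_nhds hr] with x hx
      rw [Set.mem_Ioi] at hx
      simp [ga, not_lt.2 hx.le]
    exact (hca r hr.le).congr hev.symm

lemma PhiP_hasDerivAt {γ p : ℝ} (hγ : 0 < γ) (hp : 1 < p) (s : ℝ) :
    HasDerivAt (PhiP γ p) (ga γ p s) s := by
  have hc := ga_continuous hγ hp
  exact intervalIntegral.integral_hasDerivAt_right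
    (hc.intervalIntegrable _ _)
    (hc.stronglyMeasurableAtFilter _ _)
    hc.continuousAt

lemma PhiP_nonneg {γ p : ℝ} (hγ : 0 < γ) (s : ℝ) (hs : 0 ≤ s) : 0 ≤ PhiP γ p s := by
  unfold PhiP
  apply intervalIntegral.integral_nonneg hs
  intro u _
  exact (ga_pos hγ u).le

/-- Key algebraic identity: the `j`-th entry of `A(U) * U` written as a sum over edges. -/
lemma sumA (m : ℕ) (h : ℝ) (hh : h ≠ 0) (g V : ℕ → ℝ) (j : ℕ) (hj : j < m) :
    (∑ l ∈ Finset.range m,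
      (if l = j + 1 then g j / h ^ 2
       else if j = l + 1 then g l / h ^ 2
       else if j = l then
         -(((if 0 < j then g (j - 1) else 0) +
            (if j + 1 < m then g j else 0)) / h ^ 2)
       else 0) * V l)
    = -∑ i ∈ Finset.range (m - 1),
        g i * (V (i + 1) - V i) *
          ((if i + 1 = j then (1:ℝ) else 0) - (if i = j then (1:ℝ) else 0)) / h ^ 2 := by
  have hmain : ∀ l ∈ Finset.range m,
      (if l = j + 1 then g j / h ^ 2
       else if j = l + 1 then g l / h ^ 2
       else if j = l then
         -(((if 0 < j then g (j - 1) else 0) +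
            (if j + 1 < m then g j else 0)) / h ^ 2)
       else 0) * V l =
      (if l = j + 1 then g j / h ^ 2 * V l else 0) +
      (if j = l + 1 then g l / h ^ 2 * V l else 0) +
      (if j = l then -(((if 0 < j then g (j - 1) else 0) +
            (if j + 1 < m then g j else 0)) / h ^ 2) * V l else 0) := by
    intro l _
    split_ifs <;> first | omega | ring1
  rw [Finset.sum_congr rfl hmain, Finset.sum_add_distrib, Finset.sum_add_distrib,
    Finset.sum_ite_eq' (Finset.range m) (j + 1) (fun l => g j / h ^ 2 * V l),
    Finset.sum_ite_eq (Finset.range m) j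
      (fun l => -(((if 0 < j then g (j - 1) else 0) +
        (if j + 1 < m then g j else 0)) / h ^ 2) * V l)]
  have hmain2 : ∀ i ∈ Finset.range (m - 1),
      g i * (V (i + 1) - V i) *
        ((if i + 1 = j then (1:ℝ) else 0) - (if i = j then (1:ℝ) else 0)) / h ^ 2 =
      (if i + 1 = j then g i * (V (i + 1) - V i) / h ^ 2 else 0) -
      (if i = j then g i * (V (i + 1) - V i) / h ^ 2 else 0) := by
    intro i _
    split_ifs <;> first | omega | ring1
  rw [Finset.sum_congr rfl hmain2, Finset.sum_sub_distrib,
    Finset.sum_ite_eq' (Finset.range (m - 1)) j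
      (fun i => g i * (V (i + 1) - V i) / h ^ 2)]
  rcases j with _ | jj
  · have hS2 : ∀ l ∈ Finset.range m, (if 0 = l + 1 then g l / h ^ 2 * V l else 0) = 0 := by
      intro l _; simp
    have hT1 : ∀ i ∈ Finset.range (m - 1),
        (if i + 1 = 0 then g i * (V (i + 1) - V i) / h ^ 2 else 0) = 0 := by
      intro i _; simp
    rw [Finset.sum_congr rfl hS2, Finset.sum_const_zero,
      Finset.sum_congr rfl hT1, Finset.sum_const_zero]
    simp only [Finset.mem_range, hj, if_true, Nat.lt_irrefl, if_false, zero_add]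
    split_ifs <;> first | omega | (field_simp; ring1) | field_simp
  · have hS2 : ∀ l ∈ Finset.range m,
        (if jj + 1 = l + 1 then g l / h ^ 2 * V l else 0) =
        (if l = jj then g l / h ^ 2 * V l else 0) := by
      intro l _
      split_ifs <;> first | omega | rfl
    have hT1 : ∀ i ∈ Finset.range (m - 1),
        (if i + 1 = jj + 1 then g i * (V (i + 1) - V i) / h ^ 2 else 0) =
        (if i = jj then g i * (V (i + 1) - V i) / h ^ 2 else 0) := by
      intro i _
      split_ifs <;> first | omega | rfl
    rw [Finset.sum_congr rfl hS2, Finset.sum_congr rfl hT1,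
      Finset.sum_ite_eq' (Finset.range m) jj (fun l => g l / h ^ 2 * V l),
      Finset.sum_ite_eq' (Finset.range (m - 1)) jj
        (fun i => g i * (V (i + 1) - V i) / h ^ 2)]
    have hjjm : jj ∈ Finset.range m := Finset.mem_range.2 (by omega)
    have hjm : jj + 1 ∈ Finset.range m := Finset.mem_range.2 hj
    have hjjm1 : jj ∈ Finset.range (m - 1) := Finset.mem_range.2 (by omega)
    simp only [Finset.mem_range, hjjm, hjm, hjjm1, if_true, Nat.succ_sub_one,
      Nat.zero_lt_succ]
    split_ifs <;> first | omega | (field_simp; ring1) | field_simp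

theorem stmt17 (m : ℕ) (hm : 2 ≤ m) (h γ p k : ℝ)
    (hh : 0 < h) (hγ : 0 < γ) (hp : 1 < p) (hk : 0 < k)
    (U0 : Fin m → ℝ) :
    ∃ Ustar : Fin m → ℝ,
      (((1 : Matrix (Fin m) (Fin m) ℝ) -
        k • diffMat m h (ga γ p) Ustar)).mulVec Ustar = U0 := by
  have hPhiD : ∀ s : ℝ, HasDerivAt (PhiP γ p) (ga γ p s) s := fun s => PhiP_hasDerivAt hγ hp s
  set F : (Fin m → ℝ) → ℝ := fun U =>
    (1/2) * ∑ i : Fin m, (U i - U0 i)^2 +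
    (k/2) * ∑ i ∈ Finset.range (m-1),
      PhiP γ p ((Vv m U (i+1) - Vv m U i)^2 / h^2) with hFdef
  have hVc : ∀ l : ℕ, Continuous (fun U : Fin m → ℝ => Vv m U l) := by
    intro l
    unfold Vv
    by_cases hl : l < m
    · simp only [dif_pos hl]; exact continuous_apply _
    · simp only [dif_neg hl]; exact continuous_const
  have hFc : Continuous F := by
    rw [hFdef]
    apply Continuous.add
    · exact continuous_const.mul (continuous_finset_sum _ fun i _ =>
        ((continuous_apply i).sub continuous_const).pow 2)
    · refine continuous_const.mul (continuous_finset_sum _ fun i _ => ?_)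
      have hdiff : Differentiable ℝ (PhiP γ p) := fun s => (hPhiD s).differentiableAt
      exact hdiff.continuous.comp ((((hVc (i+1)).sub (hVc i)).pow 2).div_const _)
  have hFlb : ∀ U : Fin m → ℝ, (1/2) * ∑ i : Fin m, (U i - U0 i)^2 ≤ F U := by
    intro U
    have h2 : 0 ≤ (k/2) * ∑ i ∈ Finset.range (m-1),
        PhiP γ p ((Vv m U (i+1) - Vv m U i)^2 / h^2) := by
      apply mul_nonneg (by linarith)
      apply Finset.sum_nonneg
      intro i _
      exact PhiP_nonneg hγ _ (by positivity)
    rw [hFdef]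
    linarith
  have hnormsq : ∀ U : Fin m → ℝ, ‖U - U0‖^2 ≤ ∑ i : Fin m, (U i - U0 i)^2 := by
    intro U
    have hs : 0 ≤ ∑ i : Fin m, (U i - U0 i)^2 := Finset.sum_nonneg fun i _ => sq_nonneg _
    have hn : ‖U - U0‖ ≤ Real.sqrt (∑ i : Fin m, (U i - U0 i)^2) := by
      rw [pi_norm_le_iff_of_nonneg (Real.sqrt_nonneg _)]
      intro i
      rw [Pi.sub_apply, Real.norm_eq_abs, ← Real.sqrt_sq_eq_abs]
      exact Real.sqrt_le_sqrt
        (Finset.single_le_sum (fun i _ => sq_nonneg (U i - U0 i)) (Finset.mem_univ i))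
    calc ‖U - U0‖^2 ≤ Real.sqrt (∑ i : Fin m, (U i - U0 i)^2)^2 :=
          pow_le_pow_left₀ (norm_nonneg _) hn 2
      _ = _ := Real.sq_sqrt hs
  have hFU0 : 0 ≤ F U0 := by
    have := hFlb U0
    simp only [sub_self] at this
    simpa using this
  clear_value F
  set R : ℝ := Real.sqrt (2 * F U0) + 1 with hR
  have hR0 : 0 < R := by positivity
  obtain ⟨Us, hUs_mem, hUs_min⟩ :=
    (isCompact_closedBall U0 R).exists_isMinOn
      ⟨U0, Metric.mem_closedBall_self hR0.le⟩ hFc.continuousOn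
  have hFUs : F Us ≤ F U0 := hUs_min (Metric.mem_closedBall_self hR0.le)
  have hUs_lt : ‖Us - U0‖ < R := by
    have h1 : ‖Us - U0‖^2 ≤ 2 * F U0 := by
      have ha := hFlb Us
      have hb := hnormsq Us
      nlinarith
    have h2 : ‖Us - U0‖ ≤ Real.sqrt (2 * F U0) :=
      Real.le_sqrt_of_sq_le h1
    linarith
  have hlocal : IsLocalMin F Us := by
    apply hUs_min.isLocalMin
    refine Filter.mem_of_superset
      (Metric.isOpen_ball.mem_nhds ?_) Metric.ball_subset_closedBall
    rw [Metric.mem_ball, dist_eq_norm]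
    exact hUs_lt
  refine ⟨Us, ?_⟩
  funext j
  rw [Matrix.sub_mulVec, Matrix.smul_mulVec, Matrix.one_mulVec]
  simp only [Pi.sub_apply, Pi.smul_apply, smul_eq_mul]
  -- goal : Us j - k * (diffMat m h (ga γ p) Us).mulVec Us j = U0 j
  have hjm : (j : ℕ) < m := j.isLt
  have hVsj : Vv m Us (j : ℕ) = Us j := by simp [Vv, hjm]
  have hiv : ∀ l : ℕ, (if l = (j : ℕ) then Us j else Vv m Us l) = Vv m Us l := by
    intro l
    split_ifs with hc
    · rw [hc, hVsj]
    · rfl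
  have hupd : ∀ (t : ℝ) (l : ℕ),
      Vv m (Function.update Us j t) l = if l = (j : ℕ) then t else Vv m Us l := by
    intro t l
    unfold Vv
    by_cases hl : l < m
    · simp only [dif_pos hl, Function.update_apply]
      by_cases hlj : l = (j : ℕ)
      · rw [if_pos hlj, if_pos (by exact Fin.ext hlj)]
      · exact (if_neg hlj).symm ▸ (if_neg (fun hcc : (⟨l, hl⟩ : Fin m) = j => hlj (congrArg Fin.val hcc)))
    · have hlj : l ≠ (j : ℕ) := by omega
      simp only [dif_neg hl, if_neg hlj]
  -- the one-variable function along coordinate j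
  set φ : ℝ → ℝ := fun t => F (Function.update Us j t) with hφdef
  have hφeq : φ = fun t =>
      (1/2) * ∑ i : Fin m, ((if i = j then t else Us i) - U0 i)^2 +
      (k/2) * ∑ i ∈ Finset.range (m-1),
        PhiP γ p (((if i + 1 = (j : ℕ) then t else Vv m Us (i+1)) -
                   (if i = (j : ℕ) then t else Vv m Us i))^2 / h^2) := by
    funext t
    rw [hφdef, hFdef]
    simp only [Function.update_apply, hupd]
  -- derivative of the quadratic part
  have hd1 : HasDerivAt (fun t => (1/2) * ∑ i : Fin m, ((if i = j then t else Us i) - U0 i)^2)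
      (Us j - U0 j) (Us j) := by
    have hsum : HasDerivAt (fun t => ∑ i : Fin m, ((if i = j then t else Us i) - U0 i)^2)
        (∑ i : Fin m, if i = j then 2 * (Us j - U0 j) else 0) (Us j) := by
      apply HasDerivAt.fun_sum
      intro i _
      by_cases hij : i = j
      · subst hij
        simp only [if_pos rfl]
        have hbase := ((hasDerivAt_id (Us i)).sub_const (U0 i)).fun_pow 2
        simpa using hbase
      · simp only [if_neg hij]
        exact hasDerivAt_const _ _
    have hmul := hsum.const_mul (1/2 : ℝ)
    have hval : (1/2 : ℝ) * ∑ i : Fin m, (if i = j then 2 * (Us j - U0 j) else 0)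
        = Us j - U0 j := by
      rw [Finset.sum_ite_eq' Finset.univ j (fun _ => 2 * (Us j - U0 j))]
      simp
    rw [hval] at hmul
    exact hmul
  -- derivative of each Φ term
  have hd2each : ∀ i ∈ Finset.range (m-1), HasDerivAt
      (fun t => PhiP γ p (((if i + 1 = (j : ℕ) then t else Vv m Us (i+1)) -
                   (if i = (j : ℕ) then t else Vv m Us i))^2 / h^2))
      (ga γ p ((Vv m Us (i+1) - Vv m Us i)^2 / h^2) *
        (2 * (Vv m Us (i+1) - Vv m Us i) *
          ((if i + 1 = (j : ℕ) then (1:ℝ) else 0) - (if i = (j : ℕ) then (1:ℝ) else 0)) / h^2))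
      (Us j) := by
    intro i _
    have h1 : HasDerivAt (fun t : ℝ => if i + 1 = (j : ℕ) then t else Vv m Us (i+1))
        (if i + 1 = (j : ℕ) then (1:ℝ) else 0) (Us j) := by
      split_ifs
      · exact hasDerivAt_id _
      · exact hasDerivAt_const _ _
    have h0 : HasDerivAt (fun t : ℝ => if i = (j : ℕ) then t else Vv m Us i)
        (if i = (j : ℕ) then (1:ℝ) else 0) (Us j) := by
      split_ifs
      · exact hasDerivAt_id _
      · exact hasDerivAt_const _ _
    have hin := ((h1.fun_sub h0).fun_pow 2).div_const (h^2)
    have hcomp := (hPhiD _).comp (Us j) hin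
    simp only [hiv] at hcomp
    convert hcomp using 1
    rfl
    rfl
    rfl
    push_cast
    ring
  have hd2 := (HasDerivAt.fun_sum hd2each).const_mul (k/2 : ℝ)
  have hφd : HasDerivAt φ
      ((Us j - U0 j) + (k/2) * ∑ i ∈ Finset.range (m-1),
        ga γ p ((Vv m Us (i+1) - Vv m Us i)^2 / h^2) *
        (2 * (Vv m Us (i+1) - Vv m Us i) *
          ((if i + 1 = (j : ℕ) then (1:ℝ) else 0) - (if i = (j : ℕ) then (1:ℝ) else 0)) / h^2))
      (Us j) := by
    rw [hφeq]
    exact hd1.add hd2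
  -- φ has a local minimum at Us j
  have hφmin : IsLocalMin φ (Us j) := by
    have hc : Continuous (fun t : ℝ => Function.update Us j t) := by
      refine continuous_pi fun i => ?_
      simp only [Function.update_apply]
      split_ifs
      · exact continuous_id
      · exact continuous_const
    have htend : Filter.Tendsto (fun t : ℝ => Function.update Us j t)
        (nhds (Us j)) (nhds Us) := by
      have := hc.continuousAt (x := Us j)
      rwa [ContinuousAt, Function.update_eq_self] at this
    have hev := htend.eventually hlocal
    refine hev.mono fun t ht => ?_
    show φ (Us j) ≤ φ t
    rw [hφdef]
    simpa [Function.update_eq_self] using ht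
  have hzero := hφmin.hasDerivAt_eq_zero hφd
  -- rewrite the matrix-vector product as a range sum
  have hmv : (diffMat m h (ga γ p) Us).mulVec Us j
      = ∑ l ∈ Finset.range m, (fun l : ℕ =>
          (if l = (j : ℕ) + 1 then ga γ p ((Vv m Us ((j:ℕ)+1) - Vv m Us (j:ℕ))^2 / h^2) / h ^ 2
           else if (j : ℕ) = l + 1 then ga γ p ((Vv m Us (l+1) - Vv m Us l)^2 / h^2) / h ^ 2
           else if (j : ℕ) = l then
             -(((if 0 < (j : ℕ) then ga γ p ((Vv m Us ((j:ℕ)-1+1) - Vv m Us ((j:ℕ)-1))^2 / h^2) else 0) +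
                (if (j : ℕ) + 1 < m then ga γ p ((Vv m Us ((j:ℕ)+1) - Vv m Us (j:ℕ))^2 / h^2) else 0)) / h ^ 2)
           else 0) * Vv m Us l) l := by
    rw [show (diffMat m h (ga γ p) Us).mulVec Us j
        = ∑ l : Fin m, diffMat m h (ga γ p) Us j l * Us l from by
      simp [Matrix.mulVec, dotProduct]]
    rw [← Fin.sum_univ_eq_sum_range]
    apply Finset.sum_congr rfl
    intro l _
    have hUsl : Us l = Vv m Us (l : ℕ) := by simp [Vv, l.isLt]
    rw [hUsl]
    congr 1
    simp only [diffMat, Fin.ext_iff, Vv]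
  rw [hmv]
  rw [sumA m h (ne_of_gt hh) (fun i => ga γ p ((Vv m Us (i+1) - Vv m Us i)^2 / h^2))
      (Vv m Us) (j : ℕ) hjm]
  rw [mul_neg, sub_neg_eq_add]
  have hsums : (k/2) * ∑ i ∈ Finset.range (m-1),
        ga γ p ((Vv m Us (i+1) - Vv m Us i)^2 / h^2) *
        (2 * (Vv m Us (i+1) - Vv m Us i) *
          ((if i + 1 = (j : ℕ) then (1:ℝ) else 0) - (if i = (j : ℕ) then (1:ℝ) else 0)) / h^2)
      = k * ∑ i ∈ Finset.range (m-1),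
          ga γ p ((Vv m Us (i+1) - Vv m Us i)^2 / h^2) * (Vv m Us (i+1) - Vv m Us i) *
          ((if i + 1 = (j : ℕ) then (1:ℝ) else 0) - (if i = (j : ℕ) then (1:ℝ) else 0)) / h^2 := by
    rw [Finset.mul_sum, Finset.mul_sum]
    apply Finset.sum_congr rfl
    intro i _
    ring
  linarith [hzero, hsums]
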